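/- Let ω, σ, h, L > 0 and let E be a real number with E > σ·L·ln 2/(ω·h). Then there exists a unique p > 0 satisfying p·L = ω·log₂(1 + h·p/σ)·E, i.e., a unique transmit power at which offloading the L input bits consumes exactly E units of energy. -/

import Mathlib

open Real Set

lemma aux_key (a : ℝ) (ha : 1 < a) : ∃! x : ℝ, 0 < x ∧ x = a * Real.log (1 + x) := by
  have ha0 : 0 < a := lt_trans one_pos ha
  -- existence via IVT on [a-1, 4a^2]
  have hle : a - 1 ≤ 4 * a ^ 2 := by nlinarith
  have hcont : ContinuousOn (fun x => a * Real.log (1 + x) - x) (Icc (a-1) (4*a^2)) := by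
    apply ContinuousOn.sub
    · apply ContinuousOn.mul continuousOn_const
      apply ContinuousOn.log (by fun_prop)
      intro x hx
      have : a - 1 ≤ x := hx.1
      nlinarith
    · fun_prop
  have hleft : 0 < a * Real.log (1 + (a-1)) - (a-1) := by
    have h1 : Real.log (1/a) < 1/a - 1 := Real.log_lt_sub_one_of_pos (by positivity)
      (by intro hc; rw [div_eq_one_iff_eq ha0.ne'] at hc; linarith)
    rw [Real.log_div one_ne_zero ha0.ne', Real.log_one] at h1
    have h2 : 1 - 1/a < Real.log a := by linarith
    have : (1 : ℝ) + (a - 1) = a := by ring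
    rw [this]
    have := mul_lt_mul_of_pos_left h2 ha0
    have ha' : a * (1/a) = 1 := by field_simp
    nlinarith [mul_lt_mul_of_pos_left h2 ha0]
  have hright : a * Real.log (1 + 4*a^2) - 4*a^2 < 0 := by
    set t : ℝ := 1 + 4*a^2 with ht
    have ht1 : 1 < t := by nlinarith
    have hst : 2*a - 1 < Real.sqrt t := by
      have : (2*a-1)^2 < t := by nlinarith
      nlinarith [Real.sq_sqrt (by linarith : (0:ℝ) ≤ t), Real.sqrt_nonneg t,
        sq_nonneg (Real.sqrt t - (2*a-1))]
    have hst1 : 1 < Real.sqrt t := by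
      nlinarith [Real.sq_sqrt (by linarith : (0:ℝ) ≤ t), Real.sqrt_nonneg t]
    have hlog : Real.log t ≤ 2 * (Real.sqrt t - 1) := by
      have := Real.log_le_sub_one_of_pos (by positivity : 0 < Real.sqrt t)
      rw [Real.log_sqrt (by linarith)] at this
      linarith
    have h2 : a * Real.log t ≤ a * (2 * (Real.sqrt t - 1)) :=
      mul_le_mul_of_nonneg_left hlog ha0.le
    have h3 : a * (2 * (Real.sqrt t - 1)) < (Real.sqrt t + 1) * (Real.sqrt t - 1) := by
      nlinarith
    have h4 : (Real.sqrt t + 1) * (Real.sqrt t - 1) = t - 1 := by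
      nlinarith [Real.sq_sqrt (by linarith : (0:ℝ) ≤ t)]
    have : t - 1 = 4*a^2 := by rw [ht]; ring
    linarith
  obtain ⟨x, hxmem, hxeq⟩ : ∃ x ∈ Icc (a-1) (4*a^2),
      (fun x => a * Real.log (1 + x) - x) x = 0 := by
    have := intermediate_value_Icc' hle hcont
      (Set.mem_Icc.mpr ⟨hright.le, hleft.le⟩)
    obtain ⟨x, hx, hfx⟩ := this
    exact ⟨x, hx, hfx⟩
  have hx0 : 0 < x := lt_of_lt_of_le (by linarith) hxmem.1
  have hxeq' : a * Real.log (1 + x) - x = 0 := hxeq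
  refine ⟨x, ⟨hx0, by linarith⟩, ?_⟩
  -- uniqueness
  have uniq : ∀ y z : ℝ, 0 < y → 0 < z → y = a * Real.log (1+y) → z = a * Real.log (1+z) →
      y < z → False := by
    intro y z hy hz hye hze hyz
    set t : ℝ := y / z with htdef
    have ht0 : 0 < t := by positivity
    have ht1 : t < 1 := (div_lt_one hz).mpr hyz
    have hcomb : (1 - t) • (1:ℝ) + t • (1 + z) = 1 + y := by
      simp only [smul_eq_mul, htdef]
      field_simp
      ring
    have hconc := strictConcaveOn_log_Ioi.2 (Set.mem_Ioi.mpr one_pos)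
      (Set.mem_Ioi.mpr (by linarith : (0:ℝ) < 1 + z))
      (by intro hc; nlinarith [hc] : (1:ℝ) ≠ 1 + z)
      (by linarith : (0:ℝ) < 1 - t) ht0 (by ring)
    rw [hcomb] at hconc
    simp only [smul_eq_mul, Real.log_one, mul_zero, zero_add] at hconc
    -- log (1+y) > t * log (1+z)
    have h5 : a * (t * Real.log (1 + z)) < a * Real.log (1 + y) :=
      mul_lt_mul_of_pos_left hconc (by linarith)
    rw [← hye] at h5
    have h6 : a * Real.log (1 + z) = z := hze.symm
    have : t * z = y := by rw [htdef]; field_simp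
    nlinarith
  intro y hy
  rcases lt_trichotomy y x with hc | hc | hc
  · exact absurd (uniq y x hy.1 hx0 hy.2 (by linarith) hc) not_false
  · exact hc
  · exact absurd (uniq x y hx0 hy.1 (by linarith) hy.2 hc) not_false


/-- If `E > σ·L·ln 2/(ω·h)`, then there is a unique transmit power `p > 0` at which
offloading the `L` input bits consumes exactly `E` units of energy, i.e. a unique
`p > 0` with `p·L = ω·log₂(1 + h·p/σ)·E`. -/
theorem stmt_7 (ω σ h L E : ℝ) (hω : 0 < ω) (hσ : 0 < σ) (hh : 0 < h) (hL : 0 < L)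
    (hE : σ * L * Real.log 2 / (ω * h) < E) :
    ∃! p : ℝ, 0 < p ∧ p * L = ω * Real.logb 2 (1 + h * p / σ) * E := by
  have hlog2 : (0:ℝ) < Real.log 2 := Real.log_pos (by norm_num)
  have hE0 : 0 < E := lt_trans (by positivity) hE
  set a := ω * E * h / (σ * L * Real.log 2) with ha_def
  have ha1 : 1 < a := by
    rw [ha_def, lt_div_iff₀ (by positivity)]
    rw [div_lt_iff₀ (by positivity)] at hE
    nlinarith
  have key_iff : ∀ p : ℝ, (p * L = ω * Real.logb 2 (1 + h * p / σ) * E) ↔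
      (h * p / σ = a * Real.log (1 + h * p / σ)) := by
    intro p
    rw [Real.logb, ha_def]
    constructor <;> intro heq
    · field_simp at heq ⊢
      linear_combination heq
    · field_simp at heq ⊢
      have h2 : (h * σ) * (p * L * Real.log 2) =
          (h * σ) * (ω * Real.log ((σ + h * p) / σ) * E) := by linear_combination (h * σ) * heq
      have := mul_left_cancel₀ (by positivity : h * σ ≠ 0) h2; linarith
  obtain ⟨x, ⟨hx0, hxeq⟩, hxu⟩ := aux_key a ha1
  refine ⟨σ * x / h, ⟨by positivity, ?_⟩, ?_⟩
  · rw [key_iff, show h * (σ * x / h) / σ = x from by field_simp]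
    exact hxeq
  · intro q hq
    have hq' : h * q / σ = x := hxu (h * q / σ)
      ⟨by have := hq.1; positivity, (key_iff q).mp hq.2⟩
    field_simp at hq' ⊢
    linarith
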